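/- With notation as above (UPB S, ρ the normalized projector onto H_S^⊥, H = Σ_i |α_i⟩⟨α_i|⊗|β_i⟩⟨β_i| − dε|Ψ⟩⟨Ψ|, and |Ψ⟩ maximally entangled with ⟨Ψ|ρ|Ψ⟩ > 0), one has Tr(Hρ) = −dε⟨Ψ|ρ|Ψ⟩ < 0. Hence H is an entanglement witness detecting ρ: Tr(Hρ) < 0 while Tr(H σ) ≥ 0 for all separable σ. -/

import Mathlib

open scoped BigOperators ComplexConjugate

noncomputable section

def inC {ι : Type*} [Fintype ι] (x y : ι → ℂ) : ℂ := ∑ i, conj (x i) * y i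

def prodVec {ι κ : Type*} (a : ι → ℂ) (b : κ → ℂ) : ι × κ → ℂ := fun p => a p.1 * b p.2

def outer {ι : Type*} (x : ι → ℂ) : Matrix ι ι ℂ := Matrix.vecMulVec x (star x)

def ONFam {σ ι : Type*} [DecidableEq σ] [Fintype ι] (f : σ → ι → ℂ) : Prop :=
  ∀ i j, inC (f i) (f j) = if i = j then 1 else 0

def IsUPB {σ ιA ιB : Type*} [DecidableEq σ] [Fintype σ] [Fintype ιA] [Fintype ιB]
    (α : σ → ιA → ℂ) (β : σ → ιB → ℂ) : Prop :=
  ONFam (fun i => prodVec (α i) (β i)) ∧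
  Submodule.span ℂ (Set.range fun i => prodVec (α i) (β i)) ≠ ⊤ ∧
  ∀ (a : ιA → ℂ) (b : ιB → ℂ), a ≠ 0 → b ≠ 0 →
    (∀ i, inC (prodVec (α i) (β i)) (prodVec a b) = 0) → False

def MaxEnt {m n : ℕ} (Ψ : Fin m × Fin n → ℂ) : Prop :=
  ∃ (a : Fin (min m n) → Fin m → ℂ) (b : Fin (min m n) → Fin n → ℂ),
    ONFam a ∧ ONFam b ∧
    Ψ = fun p => ((Real.sqrt (min m n) : ℝ) : ℂ)⁻¹ * (∑ i, prodVec (a i) (b i)) p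

/-- A separable state: a convex combination of unit pure product states. -/
def Separable {ιA ιB : Type*} [Fintype ιA] [Fintype ιB]
    (σ : Matrix (ιA × ιB) (ιA × ιB) ℂ) : Prop :=
  ∃ (k : ℕ) (p : Fin k → ℝ) (a : Fin k → ιA → ℂ) (b : Fin k → ιB → ℂ),
    (∀ i, 0 ≤ p i) ∧ (∀ i, inC (a i) (a i) = 1) ∧ (∀ i, inC (b i) (b i) = 1) ∧
    σ = ∑ i, (p i : ℂ) • outer (prodVec (a i) (b i))

section Helpers
variable {ι κ : Type*} [Fintype ι] [Fintype κ]

lemma conj_mul_self' (z : ℂ) : conj z * z = ((‖z‖ ^ 2 : ℝ) : ℂ) := by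
  rw [mul_comm, Complex.mul_conj]
  push_cast [Complex.normSq_eq_norm_sq]
  ring_nf

lemma inC_smul_right (x y : ι → ℂ) (c : ℂ) : inC x (c • y) = c * inC x y := by
  simp only [inC, Pi.smul_apply, smul_eq_mul, Finset.mul_sum]
  exact Finset.sum_congr rfl fun i _ => by ring

lemma inC_sub_right (x y z : ι → ℂ) : inC x (y - z) = inC x y - inC x z := by
  simp [inC, mul_sub, Finset.sum_sub_distrib]

lemma inC_sub_left (x y z : ι → ℂ) : inC (x - y) z = inC x z - inC y z := by
  simp [inC, sub_mul, Finset.sum_sub_distrib]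

lemma inC_zero_right (x : ι → ℂ) : inC x (0 : ι → ℂ) = 0 := by simp [inC]

lemma inC_sum_right {k : Type*} [Fintype k] (x : ι → ℂ) (g : k → ι → ℂ) :
    inC x (∑ i, g i) = ∑ i, inC x (g i) := by
  simp only [inC, Finset.sum_apply, Finset.mul_sum]
  exact Finset.sum_comm

lemma inC_sum_left {k : Type*} [Fintype k] (x : ι → ℂ) (g : k → ι → ℂ) :
    inC (∑ i, g i) x = ∑ i, inC (g i) x := by
  simp only [inC, Finset.sum_apply, map_sum, Finset.sum_mul]
  exact Finset.sum_comm

lemma inC_smul_left (x y : ι → ℂ) (c : ℂ) : inC (c • x) y = conj c * inC x y := by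
  simp only [inC, Pi.smul_apply, smul_eq_mul, map_mul, Finset.mul_sum]
  exact Finset.sum_congr rfl fun i _ => by ring

lemma inC_conj (x y : ι → ℂ) : inC y x = conj (inC x y) := by
  simp only [inC, map_sum, map_mul, Complex.conj_conj]
  exact Finset.sum_congr rfl fun i _ => by ring

lemma norm_inC_symm (x y : ι → ℂ) : ‖inC y x‖ = ‖inC x y‖ := by
  rw [inC_conj]; exact RCLike.norm_conj _

lemma inC_self_eq (x : ι → ℂ) : inC x x = ((∑ i, ‖x i‖ ^ 2 : ℝ) : ℂ) := by
  simp only [inC, conj_mul_self']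
  push_cast
  rfl

lemma inC_prod (a c : ι → ℂ) (b d : κ → ℂ) :
    inC (prodVec a b) (prodVec c d) = inC a c * inC b d := by
  simp only [inC, prodVec, Fintype.sum_prod_type, map_mul, Finset.sum_mul, Finset.mul_sum]
  rw [Finset.sum_comm]
  exact Finset.sum_congr rfl fun i _ => Finset.sum_congr rfl fun j _ => by ring

lemma outer_mulVec (x v : ι → ℂ) : (outer x).mulVec v = inC x v • x := by
  ext p
  simp only [outer, Matrix.mulVec, Matrix.vecMulVec, dotProduct, Matrix.of_apply,
    Pi.star_apply, Pi.smul_apply, smul_eq_mul, inC, Complex.star_def, Finset.sum_mul]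
  exact Finset.sum_congr rfl fun q _ => by ring

lemma trace_mul_outer (M : Matrix ι ι ℂ) (x : ι → ℂ) :
    (M * outer x).trace = inC x (M.mulVec x) := by
  simp only [Matrix.trace, Matrix.diag, Matrix.mul_apply, outer, Matrix.vecMulVec,
    Matrix.of_apply, Pi.star_apply, Complex.star_def, inC, Matrix.mulVec,
    dotProduct, Finset.mul_sum]
  exact Finset.sum_congr rfl fun p _ => Finset.sum_congr rfl fun q _ => by ring

lemma sum_mulVec' {k : Type*} [Fintype k] (A : k → Matrix ι ι ℂ) (v : ι → ℂ) :
    (∑ i, A i).mulVec v = ∑ i, (A i).mulVec v := by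
  ext p
  simp only [Matrix.mulVec, dotProduct, Finset.sum_apply, Matrix.sum_apply,
    Finset.sum_mul]
  exact Finset.sum_comm

lemma bessel {k : ℕ} (f : Fin k → ι → ℂ) (hf : ONFam f)
    (x : ι → ℂ) (hx : inC x x = 1) : ∑ i, ‖inC (f i) x‖ ^ 2 ≤ 1 := by
  set c : Fin k → ℂ := fun i => inC (f i) x with hc
  set r : ι → ℂ := x - ∑ i, c i • f i with hr
  have h1 : inC x (∑ i, c i • f i) = ((∑ i, ‖c i‖ ^ 2 : ℝ) : ℂ) := by
    rw [inC_sum_right, Complex.ofReal_sum]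
    refine Finset.sum_congr rfl fun i _ => ?_
    rw [inC_smul_right, show inC x (f i) = conj (c i) from inC_conj _ _, mul_comm,
      conj_mul_self']
  have h2 : inC (∑ i, c i • f i) x = ((∑ i, ‖c i‖ ^ 2 : ℝ) : ℂ) := by
    rw [inC_sum_left, Complex.ofReal_sum]
    refine Finset.sum_congr rfl fun i _ => ?_
    rw [inC_smul_left]
    exact conj_mul_self' (c i)
  have h3 : inC (∑ i, c i • f i) (∑ j, c j • f j) = ((∑ i, ‖c i‖ ^ 2 : ℝ) : ℂ) := by
    rw [inC_sum_left, Complex.ofReal_sum]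
    refine Finset.sum_congr rfl fun i _ => ?_
    rw [inC_smul_left, inC_sum_right]
    have : ∀ j, inC (f i) (c j • f j) = if i = j then c i else 0 := by
      intro j
      rw [inC_smul_right, hf i j]
      by_cases h : i = j <;> simp [h]
    simp only [this, Finset.sum_ite_eq, Finset.mem_univ, if_true]
    rw [conj_mul_self']
  have hrr : inC r r = 1 - ((∑ i, ‖c i‖ ^ 2 : ℝ) : ℂ) := by
    rw [hr, inC_sub_left, inC_sub_right, inC_sub_right, hx, h1, h2, h3]
    ring
  have h0 : (0 : ℝ) ≤ (inC r r).re := by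
    rw [inC_self_eq, Complex.ofReal_re]
    positivity
  rw [hrr] at h0
  simp only [Complex.sub_re, Complex.one_re, Complex.ofReal_re] at h0
  linarith

lemma cs_norm {k : ℕ} (c d : Fin k → ℂ) :
    ‖∑ i, c i * d i‖ ^ 2 ≤ (∑ i, ‖c i‖ ^ 2) * (∑ i, ‖d i‖ ^ 2) := by
  calc ‖∑ i, c i * d i‖ ^ 2 ≤ (∑ i, ‖c i‖ * ‖d i‖) ^ 2 := by
        have h : ‖∑ i, c i * d i‖ ≤ ∑ i, ‖c i‖ * ‖d i‖ := by
          refine (norm_sum_le _ _).trans_eq ?_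
          exact Finset.sum_congr rfl fun i _ => norm_mul _ _
        exact pow_le_pow_left₀ (norm_nonneg _) h 2
    _ ≤ _ := Finset.sum_mul_sq_le_sq_mul_sq _ _ _

end Helpers

/-- `Tr(Hρ) = −dε⟨Ψ|ρ|Ψ⟩ < 0`, while `Tr(Hσ) ≥ 0` for all
separable `σ`; so `H` is an entanglement witness detecting `ρ`. -/
theorem witness_detects_upb_state
    (m n s : ℕ) (hm : 0 < m) (hn : 0 < n)
    (α : Fin s → Fin m → ℂ) (β : Fin s → Fin n → ℂ)
    (hUPB : IsUPB α β) (hs : s < m * n)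
    (ρ : Matrix (Fin m × Fin n) (Fin m × Fin n) ℂ)
    (hρ : ρ = ((m * n - s : ℕ) : ℂ)⁻¹ • (1 - ∑ i, outer (prodVec (α i) (β i))))
    (ε : ℝ) (hε : 0 < ε)
    (hεmin : ∀ (a : Fin m → ℂ) (b : Fin n → ℂ), inC a a = 1 → inC b b = 1 →
      ε ≤ ∑ i, ‖inC a (α i)‖ ^ 2 * ‖inC b (β i)‖ ^ 2)
    (hεatt : ∃ (a : Fin m → ℂ) (b : Fin n → ℂ), inC a a = 1 ∧ inC b b = 1 ∧
      ε = ∑ i, ‖inC a (α i)‖ ^ 2 * ‖inC b (β i)‖ ^ 2)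
    (Ψ : Fin m × Fin n → ℂ) (hΨ : MaxEnt Ψ)
    (hΨρ : 0 < (inC Ψ (ρ.mulVec Ψ)).re)
    (H : Matrix (Fin m × Fin n) (Fin m × Fin n) ℂ)
    (hH : H = (∑ i, outer (prodVec (α i) (β i))) -
      (((min m n : ℝ) * ε : ℝ) : ℂ) • outer Ψ) :
    (H * ρ).trace = -((((min m n : ℝ) * ε : ℝ) : ℂ)) * inC Ψ (ρ.mulVec Ψ) ∧
    ((H * ρ).trace).re < 0 ∧
    ∀ σ : Matrix (Fin m × Fin n) (Fin m × Fin n) ℂ,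
      Separable σ → 0 ≤ ((H * σ).trace).re := by
  obtain ⟨hON, -, -⟩ := hUPB
  set P : Fin s → Fin m × Fin n → ℂ := fun i => prodVec (α i) (β i) with hP
  -- ρ annihilates each P i
  have h0 : ∀ i, ρ.mulVec (P i) = 0 := by
    intro i
    rw [hρ, Matrix.smul_mulVec, Matrix.sub_mulVec, Matrix.one_mulVec]
    have : (∑ j, outer (P j)).mulVec (P i) = P i := by
      rw [sum_mulVec']
      simp only [outer_mulVec]
      have : ∀ j, inC (P j) (P i) • P j = if j = i then P j else 0 := by
        intro j
        rw [hON j i]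
        by_cases h : j = i <;> simp [h]
      simp only [this, Finset.sum_ite_eq', Finset.mem_univ, if_true]
    rw [this, sub_self, smul_zero]
  have htr : ∀ i, (outer (P i) * ρ).trace = 0 := by
    intro i
    rw [Matrix.trace_mul_comm, trace_mul_outer, h0 i, inC_zero_right]
  -- Part 1
  have hpart1 : (H * ρ).trace = -((((min m n : ℝ) * ε : ℝ) : ℂ)) * inC Ψ (ρ.mulVec Ψ) := by
    rw [hH, Matrix.sub_mul, Matrix.trace_sub, Matrix.sum_mul, Matrix.trace_sum,
      Matrix.smul_mul, Matrix.trace_smul, Matrix.trace_mul_comm, trace_mul_outer]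
    rw [Finset.sum_eq_zero (fun i _ => htr i)]
    ring
  have hdpos : (0 : ℝ) < min (m : ℝ) (n : ℝ) := by
    refine lt_min ?_ ?_ <;> [exact_mod_cast hm; exact_mod_cast hn]
  refine ⟨hpart1, ?_, ?_⟩
  · rw [hpart1, neg_mul, Complex.neg_re, Complex.re_ofReal_mul]
    have : 0 < (min m n : ℝ) * ε * (inC Ψ (ρ.mulVec Ψ)).re :=
      mul_pos (mul_pos hdpos hε) hΨρ
    linarith
  -- Part 3: positivity on separable states
  · -- key pointwise positivity on unit product vectors
    have key : ∀ (x : Fin m → ℂ) (y : Fin n → ℂ), inC x x = 1 → inC y y = 1 →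
        0 ≤ (inC (prodVec x y) (H.mulVec (prodVec x y))).re := by
      intro x y hx hy
      set φ : Fin m × Fin n → ℂ := prodVec x y with hφ
      -- bound on overlap with maximally entangled state
      obtain ⟨u, v, hu, hv, hΨeq⟩ := hΨ
      have hΨsmul : Ψ = ((Real.sqrt (min m n) : ℝ) : ℂ)⁻¹ • ∑ i, prodVec (u i) (v i) := by
        funext p
        rw [hΨeq]
        simp [Pi.smul_apply, smul_eq_mul]
      have hoverlap : ‖inC Ψ φ‖ ^ 2 ≤ (min (m:ℝ) (n:ℝ))⁻¹ := by
        have hsum : inC Ψ φ = ((Real.sqrt (min m n) : ℝ) : ℂ)⁻¹ *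
            ∑ i, inC (u i) x * inC (v i) y := by
          rw [hΨsmul, inC_smul_left, inC_sum_left]
          congr 1
          · rw [map_inv₀, Complex.conj_ofReal]
          · exact Finset.sum_congr rfl fun i _ => inC_prod _ _ _ _
        rw [hsum, norm_mul, mul_pow]
        have h1 : ‖(((Real.sqrt (min m n) : ℝ) : ℂ))⁻¹‖ ^ 2 = (min (m:ℝ) (n:ℝ))⁻¹ := by
          rw [norm_inv, Complex.norm_real, Real.norm_eq_abs,
            abs_of_nonneg (Real.sqrt_nonneg _), inv_pow, Real.sq_sqrt hdpos.le]
        rw [h1]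
        have h2 : ‖∑ i, inC (u i) x * inC (v i) y‖ ^ 2 ≤ 1 := by
          refine (cs_norm _ _).trans ?_
          have ha := bessel u hu x hx
          have hb := bessel v hv y hy
          have hna : 0 ≤ ∑ i, ‖inC (u i) x‖ ^ 2 := Finset.sum_nonneg fun _ _ => sq_nonneg _
          nlinarith
        calc (min (m:ℝ) (n:ℝ))⁻¹ * ‖∑ i, inC (u i) x * inC (v i) y‖ ^ 2
            ≤ (min (m:ℝ) (n:ℝ))⁻¹ * 1 := by
              exact mul_le_mul_of_nonneg_left h2 (by positivity)
          _ = _ := mul_one _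
      -- compute the quadratic form
      have hform : inC φ (H.mulVec φ) =
          ((∑ i, ‖inC x (α i)‖ ^ 2 * ‖inC y (β i)‖ ^ 2 : ℝ) : ℂ) -
          (((min m n : ℝ) * ε : ℝ) : ℂ) * ((‖inC Ψ φ‖ ^ 2 : ℝ) : ℂ) := by
        rw [hH, Matrix.sub_mulVec, sum_mulVec', Matrix.smul_mulVec,
          inC_sub_right, inC_sum_right]
        congr 1
        · rw [Complex.ofReal_sum]
          refine Finset.sum_congr rfl fun i _ => ?_
          rw [outer_mulVec, inC_smul_right,
            show inC (P i) φ = conj (inC φ (P i)) from inC_conj _ _, conj_mul_self',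
            show inC φ (P i) = inC x (α i) * inC y (β i) from inC_prod _ _ _ _,
            norm_mul, mul_pow]
        · rw [inC_smul_right, outer_mulVec, inC_smul_right,
            show inC φ Ψ = conj (inC Ψ φ) from inC_conj _ _,
            mul_comm (inC Ψ φ) (conj (inC Ψ φ)), conj_mul_self']
      rw [hform]
      rw [← Complex.ofReal_mul, ← Complex.ofReal_sub, Complex.ofReal_re]
      have hmin := hεmin x y hx hy
      have : (min m n : ℝ) * ε * ‖inC Ψ φ‖ ^ 2 ≤ ε := by
        have := mul_le_mul_of_nonneg_left hoverlap
          (le_of_lt (mul_pos hdpos hε) : (0:ℝ) ≤ (min m n : ℝ) * ε)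
        calc (min m n : ℝ) * ε * ‖inC Ψ φ‖ ^ 2 ≤ (min m n : ℝ) * ε * (min (m:ℝ) (n:ℝ))⁻¹ :=
              this
          _ = ε := by field_simp
      linarith
    intro σ hsep
    obtain ⟨k, p, a, b, hp, ha, hb, hσ⟩ := hsep
    rw [hσ, Matrix.mul_sum]
    rw [Matrix.trace_sum, Complex.re_sum]
    refine Finset.sum_nonneg fun i _ => ?_
    rw [Matrix.mul_smul, Matrix.trace_smul, smul_eq_mul, Complex.re_ofReal_mul,
      trace_mul_outer]
    exact mul_nonneg (hp i) (key (a i) (b i) (ha i) (hb i))
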